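/- Let ν > 0 and α ∈ ℕ. There is a constant C = C(ν,α) > 0 such that the Beta function B(m, 2ν) = ∫₀¹ t^{m-1}(1-t)^{2ν-1} dt, viewed as a smooth function of the real variable m ∈ [1,∞), satisfies |∂ₘ^α B(m, 2ν)| ≤ C m^{-2ν-α} for all m ≥ 1. -/

import Mathlib

open MeasureTheory

/-- The Beta function `B(m, 2ν) = ∫₀¹ t^{m-1}(1-t)^{2ν-1} dt` as a function of `m`. -/
noncomputable def betaFn (ν : ℝ) (m : ℝ) : ℝ :=
  ∫ t in (0 : ℝ)..1, t ^ (m - 1) * (1 - t) ^ (2 * ν - 1)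

open MeasureTheory Set intervalIntegral

/-- `-log t ≤ (1-t)/t` for `t > 0`. -/
lemma my_neg_log_le {t : ℝ} (ht : 0 < t) : -Real.log t ≤ (1 - t) / t := by
  have h := Real.log_le_sub_one_of_pos (show (0:ℝ) < 1/t by positivity)
  rw [Real.log_div one_ne_zero ht.ne', Real.log_one] at h
  have : 1 / t - 1 = (1 - t) / t := by field_simp
  linarith [this ▸ h]

/-- `-log t ≤ δ⁻¹ t^(-δ)` for `t > 0`, `δ > 0`. -/
lemma my_neg_log_le_rpow {t δ : ℝ} (ht : 0 < t) (hδ : 0 < δ) :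
    -Real.log t ≤ δ⁻¹ * t ^ (-δ) := by
  have h := Real.log_le_sub_one_of_pos (Real.rpow_pos_of_pos ht (-δ))
  rw [Real.log_rpow ht] at h
  have h2 : -δ * Real.log t ≤ t ^ (-δ) := by nlinarith [Real.rpow_pos_of_pos ht (-δ)]
  rw [← mul_le_mul_iff_right₀ hδ]
  calc δ * -Real.log t = -δ * Real.log t := by ring
    _ ≤ t ^ (-δ) := h2
    _ = δ * (δ⁻¹ * t ^ (-δ)) := by field_simp

lemma my_aux1 {p : ℝ} (q : ℝ) (hp : -1 < p) :
    IntervalIntegrable (fun t : ℝ => t ^ p * (1 - t) ^ q) volume 0 (1/2) := by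
  set c : ℝ := max 1 ((1/2 : ℝ) ^ q) with hc
  have hc0 : 0 ≤ c := le_trans zero_le_one (le_max_left _ _)
  have hint : IntervalIntegrable (fun t : ℝ => t ^ p * c) volume 0 (1/2) :=
    (intervalIntegrable_rpow' hp).mul_const c
  refine hint.mono_fun ?_ ?_
  · apply Measurable.aestronglyMeasurable
    fun_prop
  · rw [Filter.EventuallyLE, ae_restrict_iff' measurableSet_uIoc]
    refine Filter.Eventually.of_forall fun t ht => ?_
    rw [uIoc_of_le (by norm_num : (0:ℝ) ≤ 1/2)] at ht
    obtain ⟨ht0, ht1⟩ := ht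
    have h1t : (1:ℝ)/2 ≤ 1 - t := by linarith
    have hq : (1 - t) ^ q ≤ c := by
      rcases le_or_gt 0 q with h | h
      · exact le_trans (Real.rpow_le_one (by linarith) (by linarith) h) (le_max_left _ _)
      · exact le_trans (Real.rpow_le_rpow_of_nonpos (by norm_num) h1t h.le) (le_max_right _ _)
    have h1 : 0 ≤ t ^ p := Real.rpow_nonneg ht0.le p
    have h2 : 0 ≤ (1 - t) ^ q := Real.rpow_nonneg (by linarith) q
    simp only [Real.norm_eq_abs, abs_mul, abs_of_nonneg h1, abs_of_nonneg h2, abs_of_nonneg hc0]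
    exact mul_le_mul_of_nonneg_left hq h1

/-- Integrability of `t^p (1-t)^q` on `(0,1)` for `p, q > -1`. -/
lemma my_beta_integrable {p q : ℝ} (hp : -1 < p) (hq : -1 < q) :
    IntervalIntegrable (fun t : ℝ => t ^ p * (1 - t) ^ q) volume 0 1 := by
  refine (my_aux1 q hp).trans ?_
  have h := ((my_aux1 p hq).comp_sub_left 1).symm
  have he : (fun x : ℝ => (1 - x) ^ q * x ^ p) = fun x : ℝ => x ^ p * (1 - x) ^ q :=
    funext fun x => mul_comm _ _
  norm_num at h
  rwa [he] at h

/-- Integrability of `t^p |log t|^k (1-t)^q` on `(0,1)` for `p, q > -1`. -/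
lemma my_log_beta_integrable {p q : ℝ} (k : ℕ) (hp : -1 < p) (hq : -1 < q) :
    IntervalIntegrable (fun t : ℝ => t ^ p * |Real.log t| ^ k * (1 - t) ^ q) volume 0 1 := by
  set δ : ℝ := (p + 1) / (2 * (k + 1)) with hδdef
  have hδ : 0 < δ := div_pos (by linarith) (by positivity)
  have h1 : (k : ℝ) * δ < p + 1 := by
    rw [hδdef, mul_div_assoc', div_lt_iff₀ (by positivity)]
    nlinarith [Nat.cast_nonneg (α := ℝ) k]
  have hpk : -1 < p - k * δ := by linarith
  have hint := (my_beta_integrable hpk hq).const_mul ((δ⁻¹) ^ k)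
  refine hint.mono_fun ?_ ?_
  · apply Measurable.aestronglyMeasurable
    have h1 : Measurable fun t : ℝ => (1:ℝ) - t := measurable_const.sub measurable_id
    measurability
  · rw [Filter.EventuallyLE, ae_restrict_iff' measurableSet_uIoc]
    refine Filter.Eventually.of_forall fun t ht => ?_
    rw [uIoc_of_le (by norm_num : (0:ℝ) ≤ 1)] at ht
    obtain ⟨ht0, ht1⟩ := ht
    have h1t : (0:ℝ) ≤ 1 - t := by linarith
    have hlog : |Real.log t| ^ k ≤ (δ⁻¹) ^ k * t ^ (-(δ * k)) := by
      have hl : |Real.log t| ≤ δ⁻¹ * t ^ (-δ) := by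
        rw [abs_of_nonpos (Real.log_nonpos ht0.le ht1)]
        exact my_neg_log_le_rpow ht0 hδ
      calc |Real.log t| ^ k ≤ (δ⁻¹ * t ^ (-δ)) ^ k :=
            pow_le_pow_left₀ (abs_nonneg _) hl k
        _ = (δ⁻¹) ^ k * t ^ (-(δ * k)) := by
            rw [mul_pow, ← Real.rpow_natCast (t ^ (-δ)) k, ← Real.rpow_mul ht0.le]
            ring_nf
    have hnn : 0 ≤ t ^ p := Real.rpow_nonneg ht0.le p
    have hnn2 : 0 ≤ (1 - t) ^ q := Real.rpow_nonneg h1t q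
    have key : t ^ p * |Real.log t| ^ k * (1 - t) ^ q ≤
        (δ⁻¹) ^ k * (t ^ (p - k * δ) * (1 - t) ^ q) := by
      calc t ^ p * |Real.log t| ^ k * (1 - t) ^ q
          ≤ t ^ p * ((δ⁻¹) ^ k * t ^ (-(δ * k))) * (1 - t) ^ q := by
            apply mul_le_mul_of_nonneg_right _ hnn2
            exact mul_le_mul_of_nonneg_left hlog hnn
        _ = (δ⁻¹) ^ k * (t ^ p * t ^ (-(δ * k)) * (1 - t) ^ q) := by ring
        _ = (δ⁻¹) ^ k * (t ^ (p - k * δ) * (1 - t) ^ q) := by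
            rw [← Real.rpow_add ht0]; ring_nf
    have hrhs : 0 ≤ (δ⁻¹) ^ k * (t ^ (p - k * δ) * (1 - t) ^ q) := by positivity
    simp only [Real.norm_eq_abs]
    rw [abs_of_nonneg (by positivity), abs_of_nonneg hrhs]
    exact key

/-- The `α`-th formal derivative of the Beta integral. -/
noncomputable def betaD (ν : ℝ) (α : ℕ) (m : ℝ) : ℝ :=
  ∫ t in (0 : ℝ)..1, t ^ (m - 1) * Real.log t ^ α * (1 - t) ^ (2 * ν - 1)

lemma betaD_meas (x b : ℝ) (α : ℕ) (μ : Measure ℝ) :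
    AEStronglyMeasurable (fun t : ℝ => t ^ (x - 1) * Real.log t ^ α * (1 - t) ^ b) μ := by
  apply Measurable.aestronglyMeasurable
  have h1 : Measurable fun t : ℝ => (1:ℝ) - t := measurable_const.sub measurable_id
  measurability

lemma betaD_integrable {ν : ℝ} (hν : 0 < ν) (α : ℕ) {m : ℝ} (hm : 0 < m) :
    IntervalIntegrable (fun t : ℝ => t ^ (m - 1) * Real.log t ^ α * (1 - t) ^ (2 * ν - 1))
      volume 0 1 := by
  refine (my_log_beta_integrable α (by linarith : (-1:ℝ) < m - 1)
    (by linarith : (-1:ℝ) < 2 * ν - 1)).mono_fun (betaD_meas _ _ _ _) ?_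
  refine Filter.Eventually.of_forall fun t => ?_
  simp [Real.norm_eq_abs, abs_mul, abs_pow, abs_abs, le_refl]

lemma betaD_hasDerivAt {ν : ℝ} (hν : 0 < ν) (α : ℕ) {m₀ : ℝ} (hm : 1/2 < m₀) :
    HasDerivAt (betaD ν α) (betaD ν (α + 1) m₀) m₀ := by
  set b : ℝ := 2 * ν - 1 with hb
  set ε : ℝ := (m₀ - 1/2) / 2 with hε
  have hε0 : 0 < ε := by rw [hε]; linarith
  have hme : 0 < m₀ - ε := by rw [hε]; linarith
  have key := intervalIntegral.hasDerivAt_integral_of_dominated_loc_of_deriv_le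
    (F := fun x t => t ^ (x - 1) * Real.log t ^ α * (1 - t) ^ b)
    (F' := fun x t => t ^ (x - 1) * Real.log t ^ (α + 1) * (1 - t) ^ b)
    (bound := fun t => t ^ (m₀ - ε - 1) * |Real.log t| ^ (α + 1) * (1 - t) ^ b)
    (μ := volume) (a := 0) (b := 1) (x₀ := m₀) (Metric.ball_mem_nhds m₀ hε0)
    (Filter.Eventually.of_forall fun x => betaD_meas x b α _)
    (betaD_integrable hν α (by linarith))
    (betaD_meas m₀ b (α + 1) _)
    ?_ ?_ ?_
  · exact key.2
  · -- bound
    refine Filter.Eventually.of_forall fun t ht x hx => ?_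
    rw [uIoc_of_le (by norm_num : (0:ℝ) ≤ 1)] at ht
    obtain ⟨ht0, ht1⟩ := ht
    have h1t : (0:ℝ) ≤ 1 - t := by linarith
    have hxm : m₀ - ε - 1 ≤ x - 1 := by
      rw [Metric.mem_ball, Real.dist_eq, abs_sub_lt_iff] at hx
      linarith [hx.2]
    have hb1 : 0 ≤ (1 - t) ^ b := Real.rpow_nonneg h1t b
    have ht' : t ^ (x - 1) ≤ t ^ (m₀ - ε - 1) :=
      Real.rpow_le_rpow_of_exponent_ge ht0 ht1 hxm
    calc ‖t ^ (x - 1) * Real.log t ^ (α + 1) * (1 - t) ^ b‖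
        = t ^ (x - 1) * |Real.log t| ^ (α + 1) * (1 - t) ^ b := by
          rw [Real.norm_eq_abs, abs_mul, abs_mul, abs_pow,
            abs_of_nonneg (Real.rpow_nonneg ht0.le _), abs_of_nonneg hb1]
      _ ≤ t ^ (m₀ - ε - 1) * |Real.log t| ^ (α + 1) * (1 - t) ^ b := by
          apply mul_le_mul_of_nonneg_right _ hb1
          exact mul_le_mul_of_nonneg_right ht' (by positivity)
  · -- bound integrable
    exact my_log_beta_integrable (α + 1) (by linarith : (-1:ℝ) < m₀ - ε - 1)
      (by linarith : (-1:ℝ) < b)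
  · -- differentiability
    refine Filter.Eventually.of_forall fun t ht x _ => ?_
    rw [uIoc_of_le (by norm_num : (0:ℝ) ≤ 1)] at ht
    have hd : HasDerivAt (fun y : ℝ => t ^ (y - 1)) (t ^ (x - 1) * Real.log t) x := by
      have h := (Real.hasStrictDerivAt_const_rpow ht.1 (x - 1)).hasDerivAt
      have h2 := h.comp x ((hasDerivAt_id x).sub_const 1)
      simpa [Function.comp_def] using h2
    have := (hd.mul_const (Real.log t ^ α)).mul_const ((1 - t) ^ b)
    convert this using 1
    · rfl
    · ring

lemma iteratedDeriv_betaFn {ν : ℝ} (hν : 0 < ν) (α : ℕ) :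
    ∀ m : ℝ, 1/2 < m → iteratedDeriv α (betaFn ν) m = betaD ν α m := by
  induction α with
  | zero =>
    intro m _
    rw [iteratedDeriv_zero]
    unfold betaFn betaD
    simp
  | succ n ih =>
    intro m hm
    rw [iteratedDeriv_succ]
    have hev : iteratedDeriv n (betaFn ν) =ᶠ[nhds m] betaD ν n := by
      filter_upwards [IsOpen.mem_nhds isOpen_Ioi (show m ∈ Ioi (1/2 : ℝ) from hm)] with x hx
      exact ih x hx
    rw [hev.deriv_eq, (betaD_hasDerivAt hν n hm).deriv]

lemma my_exp_integrableOn {s x : ℝ} (hs : 0 < s) (hx : 1 ≤ x) :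
    IntegrableOn (fun u : ℝ => u ^ (s - 1) * Real.exp (-(x * u))) (Ioi 0) volume := by
  have hx0 : (0:ℝ) < x := lt_of_lt_of_le one_pos hx
  refine (Real.GammaIntegral_convergent hs).mono' ?_ ?_
  · apply Measurable.aestronglyMeasurable
    have h1 : Measurable fun u : ℝ => -(x * u) := (measurable_const.mul measurable_id).neg
    measurability
  · rw [ae_restrict_iff' measurableSet_Ioi]
    refine Filter.Eventually.of_forall fun u hu => ?_
    rw [mem_Ioi] at hu
    have h1 : Real.exp (-(x * u)) ≤ Real.exp (-u) := by
      apply Real.exp_le_exp.mpr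
      nlinarith
    have h2 : 0 ≤ u ^ (s - 1) := Real.rpow_nonneg hu.le _
    rw [Real.norm_eq_abs, abs_of_nonneg (by positivity)]
    calc u ^ (s - 1) * Real.exp (-(x * u)) ≤ u ^ (s - 1) * Real.exp (-u) :=
          mul_le_mul_of_nonneg_left h1 h2
      _ = Real.exp (-u) * u ^ (s - 1) := mul_comm _ _

lemma my_key_integrable {s x : ℝ} (hs : 0 < s) (hx : 1 ≤ x) :
    IntervalIntegrable
      (fun t : ℝ => Real.exp 1 * ((1 - t) ^ (s - 1) * Real.exp (-(x * (1 - t)))))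
      volume 0 1 := by
  have hIoc : IntegrableOn (fun u : ℝ => u ^ (s - 1) * Real.exp (-(x * u))) (Ioc 0 1) volume :=
    (my_exp_integrableOn hs hx).mono_set Ioc_subset_Ioi_self
  have hI : IntervalIntegrable (fun u : ℝ => u ^ (s - 1) * Real.exp (-(x * u))) volume 0 1 :=
    (intervalIntegrable_iff_integrableOn_Ioc_of_le zero_le_one).mpr hIoc
  have h2 := (hI.comp_sub_left 1).symm
  norm_num at h2
  exact h2.const_mul _

lemma my_key_bound {s x : ℝ} (hs : 0 < s) (hx : 1 ≤ x) :
    |∫ t in (0:ℝ)..1, Real.exp 1 * ((1 - t) ^ (s - 1) * Real.exp (-(x * (1 - t))))| ≤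
      Real.exp 1 * Real.Gamma s * x ^ (-s) := by
  have hx0 : (0:ℝ) < x := lt_of_lt_of_le one_pos hx
  set g : ℝ → ℝ := fun u => u ^ (s - 1) * Real.exp (-(x * u)) with hg
  have h0 : ∀ t ∈ Icc (0:ℝ) 1, 0 ≤ Real.exp 1 * ((1 - t) ^ (s - 1) * Real.exp (-(x * (1 - t)))) := by
    intro t ht
    have : (0:ℝ) ≤ 1 - t := by linarith [ht.2]
    positivity
  rw [abs_of_nonneg (intervalIntegral.integral_nonneg zero_le_one h0)]
  have e1 : (∫ t in (0:ℝ)..1, Real.exp 1 * ((1 - t) ^ (s - 1) * Real.exp (-(x * (1 - t))))) =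
      Real.exp 1 * ∫ t in (0:ℝ)..1, g (1 - t) := by
    rw [intervalIntegral.integral_const_mul]
  have e2 : (∫ t in (0:ℝ)..1, g (1 - t)) = ∫ u in (0:ℝ)..1, g u := by
    have := intervalIntegral.integral_comp_sub_left (a := 0) (b := 1) g 1
    simpa only [show (1:ℝ) - 1 = 0 by norm_num, show (1:ℝ) - 0 = 1 by norm_num] using this
  have e3 : (∫ u in (0:ℝ)..1, g u) ≤ ∫ u in Ioi (0:ℝ), g u := by
    rw [intervalIntegral.integral_of_le zero_le_one]
    refine setIntegral_mono_set (my_exp_integrableOn hs hx) ?_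
      (HasSubset.Subset.eventuallyLE Ioc_subset_Ioi_self)
    rw [Filter.EventuallyLE, ae_restrict_iff' measurableSet_Ioi]
    refine Filter.Eventually.of_forall fun u hu => ?_
    rw [mem_Ioi] at hu
    have : 0 ≤ u ^ (s - 1) := Real.rpow_nonneg hu.le _
    simp only [hg, Pi.zero_apply]
    positivity
  have e4 : (∫ u in Ioi (0:ℝ), g u) = (1 / x) ^ s * Real.Gamma s :=
    Real.integral_rpow_mul_exp_neg_mul_Ioi hs hx0
  have e5 : (1 / x : ℝ) ^ s = x ^ (-s) := by
    rw [one_div, Real.inv_rpow hx0.le, ← Real.rpow_neg hx0.le]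
  calc (∫ t in (0:ℝ)..1, Real.exp 1 * ((1 - t) ^ (s - 1) * Real.exp (-(x * (1 - t)))))
      = Real.exp 1 * ∫ t in (0:ℝ)..1, g (1 - t) := e1
    _ = Real.exp 1 * ∫ u in (0:ℝ)..1, g u := by rw [e2]
    _ ≤ Real.exp 1 * ∫ u in Ioi (0:ℝ), g u := by
        apply mul_le_mul_of_nonneg_left e3 (Real.exp_pos 1).le
    _ = Real.exp 1 * Real.Gamma s * x ^ (-s) := by rw [e4, e5]; ring

/-- Symbol-type estimates for the Beta function: `|∂ₘ^α B(m, 2ν)| ≤ C m^{-2ν-α}` for `m ≥ 1`. -/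
theorem betaFn_iteratedDeriv_bound (ν : ℝ) (hν : 0 < ν) (α : ℕ) :
    ∃ C : ℝ, 0 < C ∧ ∀ m : ℝ, 1 ≤ m →
      |iteratedDeriv α (betaFn ν) m| ≤ C * m ^ (-(2 * ν) - α) := by
  set s : ℝ := 2 * ν + α with hsdef
  have hα0 : (0:ℝ) ≤ α := Nat.cast_nonneg α
  have hs : 0 < s := by positivity
  set K : ℝ := |∫ t in (0:ℝ)..1, t ^ (0:ℝ) * |Real.log t| ^ α * (1 - t) ^ (2 * ν - 1)| with hK
  have hK0 : 0 ≤ K := abs_nonneg _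
  have h2a2 : (0:ℝ) < 2 * α + 2 := by positivity
  refine ⟨(K + 1) * (2 * α + 2) ^ s + Real.exp 1 * Real.Gamma s * 2 ^ s, ?_, ?_⟩
  · have h1 : (0:ℝ) < (K + 1) * (2 * α + 2) ^ s :=
      mul_pos (by linarith) (Real.rpow_pos_of_pos h2a2 s)
    have h2 : (0:ℝ) < Real.exp 1 * Real.Gamma s * 2 ^ s := by positivity
    linarith
  intro m hm
  have hm0 : (0:ℝ) < m := by linarith
  have hms : 0 < m ^ (-s) := Real.rpow_pos_of_pos hm0 (-s)
  have hexp : -(2 * ν) - (α:ℝ) = -s := by rw [hsdef]; ring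
  rw [hexp, iteratedDeriv_betaFn hν α m (by linarith)]
  have hone : ∀ᵐ t : ℝ ∂(volume.restrict (Set.uIoc (0:ℝ) 1)), t ≠ (1:ℝ) := by
    refine ae_restrict_of_ae (ae_iff.mpr ?_)
    simpa using Real.volume_singleton
  rcases le_or_gt m (2 * α + 2) with hcase | hcase
  · -- small m : bound by K
    have hbd : |betaD ν α m| ≤ K := by
      rw [← Real.norm_eq_abs]
      unfold betaD
      refine intervalIntegral.norm_integral_le_abs_of_norm_le ?_
        (my_log_beta_integrable α (by norm_num) (by linarith))
      filter_upwards [ae_restrict_mem measurableSet_uIoc] with t hmem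
      rw [uIoc_of_le (by norm_num : (0:ℝ) ≤ 1)] at hmem
      obtain ⟨ht0, ht1⟩ := hmem
      have h1t : (0:ℝ) ≤ 1 - t := by linarith
      have hb : 0 ≤ (1 - t) ^ (2 * ν - 1) := Real.rpow_nonneg h1t _
      have htp : t ^ (m - 1) ≤ t ^ (0:ℝ) := by
        rw [Real.rpow_zero]
        exact Real.rpow_le_one ht0.le ht1 (by linarith)
      calc ‖t ^ (m - 1) * Real.log t ^ α * (1 - t) ^ (2 * ν - 1)‖
          = t ^ (m - 1) * |Real.log t| ^ α * (1 - t) ^ (2 * ν - 1) := by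
            rw [Real.norm_eq_abs, abs_mul, abs_mul, abs_pow,
              abs_of_nonneg (Real.rpow_nonneg ht0.le _), abs_of_nonneg hb]
        _ ≤ t ^ (0:ℝ) * |Real.log t| ^ α * (1 - t) ^ (2 * ν - 1) := by
            apply mul_le_mul_of_nonneg_right _ hb
            exact mul_le_mul_of_nonneg_right htp (by positivity)
    have hmono : (2 * α + 2 : ℝ) ^ (-s) ≤ m ^ (-s) :=
      Real.rpow_le_rpow_of_nonpos hm0 hcase (by linarith)
    have hcancel : (2 * (α:ℝ) + 2) ^ s * (2 * (α:ℝ) + 2) ^ (-s) = 1 := by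
      rw [← Real.rpow_add h2a2]
      simp
    have h1 : K ≤ ((K + 1) * (2 * α + 2) ^ s) * m ^ (-s) := by
      calc K ≤ (K + 1) * ((2 * (α:ℝ) + 2) ^ s * (2 * (α:ℝ) + 2) ^ (-s)) := by
            rw [hcancel]; linarith
        _ = ((K + 1) * (2 * α + 2) ^ s) * (2 * (α:ℝ) + 2) ^ (-s) := by ring
        _ ≤ ((K + 1) * (2 * α + 2) ^ s) * m ^ (-s) := by
            apply mul_le_mul_of_nonneg_left hmono
            positivity
    have h2 : 0 ≤ Real.exp 1 * Real.Gamma s * 2 ^ s * m ^ (-s) := by positivity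
    calc |betaD ν α m| ≤ K := hbd
      _ ≤ ((K + 1) * (2 * α + 2) ^ s) * m ^ (-s) := h1
      _ ≤ ((K + 1) * (2 * α + 2) ^ s + Real.exp 1 * Real.Gamma s * 2 ^ s) * m ^ (-s) := by
          nlinarith
  · -- large m
    set x : ℝ := m - α with hxdef
    have hx1 : (1:ℝ) ≤ x := by rw [hxdef]; linarith
    have hbd : |betaD ν α m| ≤
        |∫ t in (0:ℝ)..1, Real.exp 1 * ((1 - t) ^ (s - 1) * Real.exp (-(x * (1 - t))))| := by
      rw [← Real.norm_eq_abs]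
      unfold betaD
      refine intervalIntegral.norm_integral_le_abs_of_norm_le ?_ (my_key_integrable hs hx1)
      filter_upwards [ae_restrict_mem measurableSet_uIoc, hone] with t hmem hne
      rw [uIoc_of_le (by norm_num : (0:ℝ) ≤ 1)] at hmem
      obtain ⟨ht0, ht1'⟩ := hmem
      have ht1 : t < 1 := lt_of_le_of_ne ht1' hne
      have h1t0 : (0:ℝ) < 1 - t := by linarith
      have hb : 0 ≤ (1 - t) ^ (2 * ν - 1) := Real.rpow_nonneg h1t0.le _
      have hlog : |Real.log t| ≤ (1 - t) / t := by
        rw [abs_of_nonpos (Real.log_nonpos ht0.le ht1.le)]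
        exact my_neg_log_le ht0
      have step2 : |Real.log t| ^ α ≤ ((1 - t) / t) ^ α :=
        pow_le_pow_left₀ (abs_nonneg _) hlog α
      have e : t ^ (m - 1) * ((1 - t) / t) ^ α * (1 - t) ^ (2 * ν - 1) =
          t ^ (x - 1) * (1 - t) ^ (s - 1) := by
        have h1 : ((1 - t) / t : ℝ) ^ α = (1 - t) ^ (α:ℝ) * (t ^ (α:ℝ))⁻¹ := by
          rw [div_pow, div_eq_mul_inv, Real.rpow_natCast, Real.rpow_natCast]
        rw [h1, ← Real.rpow_neg ht0.le]
        rw [show t ^ (m - 1) * ((1 - t) ^ (α:ℝ) * t ^ (-(α:ℝ))) * (1 - t) ^ (2 * ν - 1)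
            = (t ^ (m - 1) * t ^ (-(α:ℝ))) * ((1 - t) ^ (α:ℝ) * (1 - t) ^ (2 * ν - 1)) from by
          ring]
        rw [← Real.rpow_add ht0, ← Real.rpow_add h1t0]
        congr 1
        · congr 1
          rw [hxdef]; ring
        · congr 1
          rw [hsdef]; ring
      have step4 : t ^ (x - 1) ≤ Real.exp 1 * Real.exp (-(x * (1 - t))) := by
        have ht_exp : t ≤ Real.exp (t - 1) := by linarith [Real.add_one_le_exp (t - 1)]
        calc t ^ (x - 1) ≤ Real.exp (t - 1) ^ (x - 1) :=
              Real.rpow_le_rpow ht0.le ht_exp (by linarith)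
          _ = Real.exp ((t - 1) * (x - 1)) := (Real.exp_mul _ _).symm
          _ = Real.exp (1 - t) * Real.exp (-(x * (1 - t))) := by
              rw [← Real.exp_add]; congr 1; ring
          _ ≤ Real.exp 1 * Real.exp (-(x * (1 - t))) := by
              apply mul_le_mul_of_nonneg_right _ (Real.exp_pos _).le
              exact Real.exp_le_exp.mpr (by linarith)
      calc ‖t ^ (m - 1) * Real.log t ^ α * (1 - t) ^ (2 * ν - 1)‖
          = t ^ (m - 1) * |Real.log t| ^ α * (1 - t) ^ (2 * ν - 1) := by
            rw [Real.norm_eq_abs, abs_mul, abs_mul, abs_pow,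
              abs_of_nonneg (Real.rpow_nonneg ht0.le _), abs_of_nonneg hb]
        _ ≤ t ^ (m - 1) * ((1 - t) / t) ^ α * (1 - t) ^ (2 * ν - 1) := by
            apply mul_le_mul_of_nonneg_right _ hb
            exact mul_le_mul_of_nonneg_left step2 (Real.rpow_nonneg ht0.le _)
        _ = t ^ (x - 1) * (1 - t) ^ (s - 1) := e
        _ ≤ (Real.exp 1 * Real.exp (-(x * (1 - t)))) * (1 - t) ^ (s - 1) :=
            mul_le_mul_of_nonneg_right step4 (Real.rpow_nonneg h1t0.le _)
        _ = Real.exp 1 * ((1 - t) ^ (s - 1) * Real.exp (-(x * (1 - t)))) := by ring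
    have hxs : x ^ (-s) ≤ 2 ^ s * m ^ (-s) := by
      have hm2 : (0:ℝ) < m / 2 := by linarith
      have hmx : m / 2 ≤ x := by rw [hxdef]; linarith
      have h1 : x ^ (-s) ≤ (m / 2) ^ (-s) :=
        Real.rpow_le_rpow_of_nonpos hm2 hmx (by linarith)
      have h2 : (m / 2 : ℝ) ^ (-s) = 2 ^ s * m ^ (-s) := by
        rw [Real.rpow_neg hm2.le, Real.rpow_neg hm0.le,
          Real.div_rpow hm0.le (by norm_num : (0:ℝ) ≤ 2), inv_div, div_eq_mul_inv]
      linarith [h2 ▸ h1]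
    have hfin : Real.exp 1 * Real.Gamma s * x ^ (-s) ≤
        (Real.exp 1 * Real.Gamma s * 2 ^ s) * m ^ (-s) := by
      have h3 : 0 ≤ Real.exp 1 * Real.Gamma s := by positivity
      calc Real.exp 1 * Real.Gamma s * x ^ (-s)
          ≤ Real.exp 1 * Real.Gamma s * (2 ^ s * m ^ (-s)) :=
            mul_le_mul_of_nonneg_left hxs h3
        _ = (Real.exp 1 * Real.Gamma s * 2 ^ s) * m ^ (-s) := by ring
    have hKterm : 0 ≤ (K + 1) * (2 * α + 2) ^ s * m ^ (-s) := by positivity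
    calc |betaD ν α m|
        ≤ |∫ t in (0:ℝ)..1, Real.exp 1 * ((1 - t) ^ (s - 1) * Real.exp (-(x * (1 - t))))| := hbd
      _ ≤ Real.exp 1 * Real.Gamma s * x ^ (-s) := my_key_bound hs hx1
      _ ≤ (Real.exp 1 * Real.Gamma s * 2 ^ s) * m ^ (-s) := hfin
      _ ≤ ((K + 1) * (2 * α + 2) ^ s + Real.exp 1 * Real.Gamma s * 2 ^ s) * m ^ (-s) := by
          nlinarith
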